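/- Let G act translatively on a poset P with P/G a poset. For every x ∈ P there is an isomorphism of posets (P/G)_{≥Gx} ≅ P_{≥x} / stab(x), and the induced action of stab(x) on P_{≥x} is translative. -/
import Mathlib


/-- Let `G` act translatively on a poset `P` with `P/G` a poset. For every
`x ∈ P`, the induced action of `stab(x)` on `P_{≥x}` is translative, and the map
`stab(x)·y ↦ G·y` is an isomorphism of posets `P_{≥x}/stab(x) ≅ (P/G)_{≥Gx}`:
it is injective on `stab(x)`-orbits, surjective onto orbits above `Gx`, and order-reflecting. -/
theorem translative_quotient_upper_interval_iso
    {G P : Type*} [Group G] [PartialOrder P] [MulAction G P]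
    (hact : ∀ (g : G) (x y : P), x ≤ y ↔ g • x ≤ g • y)
    (htrans : ∀ (p : P) (g : G), (∃ u : P, p ≤ u ∧ g • p ≤ u) → g • p = p)
    (hposet : ∀ p q : P, (∃ g : G, g • p ≤ q) → (∃ g : G, g • q ≤ p) → ∃ g : G, g • p = q)
    (x : P) :
    (∀ g ∈ MulAction.stabilizer G x, ∀ y : P, x ≤ y →
        (∃ u : P, y ≤ u ∧ g • y ≤ u) → g • y = y) ∧
    (∀ y z : P, x ≤ y → x ≤ z → (∃ g : G, g • y = z) →
        ∃ h ∈ MulAction.stabilizer G x, h • y = z) ∧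
    (∀ z : P, (∃ g : G, g • x ≤ z) → ∃ y : P, x ≤ y ∧ ∃ g : G, g • y = z) ∧
    (∀ y z : P, x ≤ y → x ≤ z → (∃ g : G, g • y ≤ z) →
        ∃ h ∈ MulAction.stabilizer G x, h • y ≤ z) := by
  refine ⟨?_, ?_, ?_, ?_⟩
  · intro g _ y _ hu
    exact htrans y g hu
  · intro y z hxy hxz ⟨g, hg⟩
    have hgx : g • x ≤ z := hg ▸ (hact g x y).mp hxy
    have : g • x = x := htrans x g ⟨z, hxz, hgx⟩
    exact ⟨g, this, hg⟩
  · intro z ⟨g, hg⟩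
    exact ⟨g⁻¹ • z, by simpa using (hact g x (g⁻¹ • z)).mpr (by simpa using hg), g, by simp⟩
  · intro y z hxy hxz ⟨g, hg⟩
    have hgx : g • x ≤ z := le_trans ((hact g x y).mp hxy) hg
    have : g • x = x := htrans x g ⟨z, hxz, hgx⟩
    exact ⟨g, this, hg⟩
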